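/- Let A, α ∈ ℝ with cos(Aπ) ≠ 0 and α > 4(|cos(Aπ)| − 1)/π. Then: (a) for every κ > 0 one has cosh(κπ) + (α/(4κ))·sinh(κπ) > |cos(Aπ)| (so there is no negative energy in the spectrum); and (b) there exists k ∈ (0, 1) such that |cos(kπ) + (α/(4k))·sin(kπ)| ≤ |cos(Aπ)| (so the first spectral band meets the interval (0,1) of momenta). -/

import Mathlib

open scoped Real

lemma sinh_le_mul_cosh {x : ℝ} (hx : 0 ≤ x) : Real.sinh x ≤ x * Real.cosh x := by
  have h : ∀ y ∈ Set.Icc (0:ℝ) x, HasDerivAt (fun t => t * Real.cosh t - Real.sinh t)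
      (y * Real.sinh y) y := by
    intro y _
    have := ((hasDerivAt_id' y).mul (Real.hasDerivAt_cosh y)).sub (Real.hasDerivAt_sinh y)
    rw [show y * Real.sinh y = 1 * Real.cosh y + y * Real.sinh y - Real.cosh y by ring]
    exact this
  have hmono : MonotoneOn (fun t => t * Real.cosh t - Real.sinh t) (Set.Icc 0 x) := by
    apply monotoneOn_of_deriv_nonneg (convex_Icc 0 x)
    · exact (ContinuousOn.sub ((continuousOn_id).mul Real.continuous_cosh.continuousOn)
        Real.continuous_sinh.continuousOn)
    · intro y hy
      rw [interior_Icc] at hy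
      exact ((h y ⟨le_of_lt hy.1, le_of_lt hy.2⟩).differentiableAt).differentiableWithinAt
    · intro y hy
      rw [interior_Icc] at hy
      rw [(h y ⟨le_of_lt hy.1, le_of_lt hy.2⟩).deriv]
      exact mul_nonneg hy.1.le (Real.sinh_nonneg_iff.2 hy.1.le)
  have h0 := hmono (Set.left_mem_Icc.2 hx) (Set.right_mem_Icc.2 hx) hx
  simp only [Real.sinh_zero, Real.cosh_zero, mul_one, zero_mul, sub_zero, zero_sub] at h0
  linarith

lemma tendsto_sin_div : Filter.Tendsto (fun t : ℝ => Real.sin t / t)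
    (nhdsWithin 0 {0}ᶜ) (nhds 1) := by
  have h := Real.hasDerivAt_sin 0
  rw [hasDerivAt_iff_tendsto_slope] at h
  simp only [slope_fun_def_field, Real.sin_zero, sub_zero, Real.cos_zero] at h
  exact h

theorem first_band_positive (A α : ℝ) (hA : Real.cos (A * π) ≠ 0)
    (hα : α > 4 * (|Real.cos (A * π)| - 1) / π) :
    (∀ κ : ℝ, 0 < κ →
      Real.cosh (κ * π) + α / (4 * κ) * Real.sinh (κ * π) > |Real.cos (A * π)|) ∧
    (∃ k ∈ Set.Ioo (0 : ℝ) 1,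
      |Real.cos (k * π) + α / (4 * k) * Real.sin (k * π)| ≤ |Real.cos (A * π)|) := by
  set c := |Real.cos (A * π)| with hc
  have hπ : (0:ℝ) < π := Real.pi_pos
  have hc0 : 0 < c := abs_pos.2 hA
  have hc1 : c ≤ 1 := Real.abs_cos_le_one _
  have hαπ : α * π > 4 * (c - 1) := by
    have := (div_lt_iff₀ hπ).1 hα
    linarith
  constructor
  · intro κ hκ
    set x := κ * π with hx
    have hx0 : 0 < x := mul_pos hκ hπ
    have hsinh : 0 < Real.sinh x := Real.sinh_pos_iff.2 hx0
    have hcosh : 1 ≤ Real.cosh x := Real.one_le_cosh x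
    have hkey : Real.sinh x ≤ x * Real.cosh x := sinh_le_mul_cosh hx0.le
    have h1 : α / (4 * κ) * Real.sinh x > (c - 1) / x * Real.sinh x := by
      apply mul_lt_mul_of_pos_right _ hsinh
      rw [div_lt_div_iff₀ hx0 (by linarith : (0:ℝ) < 4 * κ)]
      calc (c - 1) * (4 * κ) = 4 * (c-1) * κ := by ring
        _ < α * π * κ := by
          rcases lt_trichotomy (c-1) 0 with h|h|h
          · nlinarith
          · nlinarith
          · nlinarith
        _ = α * x := by rw [hx]; ring
    have h2 : (c - 1) / x * Real.sinh x ≥ (c - 1) * Real.cosh x := by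
      rw [div_mul_eq_mul_div, ge_iff_le, le_div_iff₀ hx0]
      nlinarith
    nlinarith [mul_le_mul_of_nonneg_left hcosh hc0.le]
  · -- part (b)
    set f := fun k : ℝ => Real.cos (k * π) + α / (4 * k) * Real.sin (k * π) with hf
    -- limit of f at 0⁺ is 1 + α * π / 4 > c
    have htend : Filter.Tendsto f (nhdsWithin 0 (Set.Ioi 0)) (nhds (1 + α * π / 4)) := by
      have h1 : Filter.Tendsto (fun k : ℝ => Real.cos (k * π)) (nhdsWithin 0 (Set.Ioi 0))
          (nhds 1) := by
        have : Filter.Tendsto (fun k : ℝ => Real.cos (k * π)) (nhds 0) (nhds 1) := by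
          have := (Real.continuous_cos.comp (continuous_mul_right π)).tendsto 0
          simpa [Function.comp_def] using this
        exact this.mono_left nhdsWithin_le_nhds
      have hmap : Filter.Tendsto (fun k : ℝ => k * π) (nhdsWithin 0 (Set.Ioi 0))
          (nhdsWithin 0 {0}ᶜ) := by
        apply tendsto_nhdsWithin_of_tendsto_nhds_of_eventually_within
        · exact (Filter.Tendsto.mono_left
            (by simpa using (continuous_mul_right π).tendsto (0:ℝ)) nhdsWithin_le_nhds)
        · filter_upwards [self_mem_nhdsWithin] with k hk
          exact ne_of_gt (mul_pos hk hπ)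
      have h2 : Filter.Tendsto (fun k : ℝ => Real.sin (k * π) / (k * π))
          (nhdsWithin 0 (Set.Ioi 0)) (nhds 1) := tendsto_sin_div.comp hmap
      have h3 : Filter.Tendsto (fun k : ℝ => α * π / 4 * (Real.sin (k * π) / (k * π)))
          (nhdsWithin 0 (Set.Ioi 0)) (nhds (α * π / 4)) := by
        simpa using h2.const_mul (α * π / 4)
      have heq : ∀ k ∈ Set.Ioi (0:ℝ),
          Real.cos (k * π) + α * π / 4 * (Real.sin (k * π) / (k * π)) = f k := by
        intro k hk
        have hk0 : (k:ℝ) ≠ 0 := ne_of_gt hk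
        simp only [hf]; field_simp
      have := h1.add h3
      refine Filter.Tendsto.congr' ?_ this
      filter_upwards [self_mem_nhdsWithin] with k hk using heq k hk
    have hlim : c < 1 + α * π / 4 := by linarith
    have hev : ∀ᶠ k in nhdsWithin 0 (Set.Ioi 0), c < f k :=
      htend.eventually (eventually_gt_nhds hlim)
    have hev2 : ∀ᶠ k in nhdsWithin (0:ℝ) (Set.Ioi 0), k < 1 :=
      Filter.Eventually.filter_mono nhdsWithin_le_nhds
        (eventually_lt_nhds (by norm_num : (0:ℝ) < 1))
    have hev3 : ∀ᶠ k in nhdsWithin (0:ℝ) (Set.Ioi 0), 0 < k :=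
      eventually_mem_nhdsWithin
    obtain ⟨ε, hεf, hε1, hε0⟩ := (hev.and (hev2.and hev3)).exists
    -- continuity on [ε, 1]
    have hcont : ContinuousOn f (Set.Icc ε 1) := by
      apply ContinuousOn.add
      · exact (Real.continuous_cos.comp (continuous_mul_right π)).continuousOn
      · apply ContinuousOn.mul
        · apply ContinuousOn.div continuousOn_const
            ((continuous_const.mul continuous_id).continuousOn)
          intro x hx
          have : 0 < x := lt_of_lt_of_le hε0 hx.1
          exact mul_ne_zero (by norm_num) this.ne'
        · exact (Real.continuous_sin.comp (continuous_mul_right π)).continuousOn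
    have hf1 : f 1 = -1 := by simp [hf]
    have hmem : c ∈ Set.Icc (f 1) (f ε) := ⟨by rw [hf1]; linarith, hεf.le⟩
    obtain ⟨k, hk, hfk⟩ := intermediate_value_Icc' hε1.le hcont hmem
    refine ⟨k, ⟨lt_of_lt_of_le hε0 hk.1, ?_⟩, ?_⟩
    · rcases lt_or_eq_of_le hk.2 with h|h
      · exact h
      · exfalso; rw [h, hf1] at hfk; linarith
    · rw [show Real.cos (k * π) + α / (4 * k) * Real.sin (k * π) = f k from rfl, hfk,
        abs_of_pos hc0]
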